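/- With n_m := v_m × v_{m+1} and α_m := |v_{m-1} v_m v_{m+1}|, one has |n_{i-1} n_i n_{i+1}| = α_i · α_{i+1}. -/

import Mathlib

open Matrix

noncomputable def det3 (a b c : Fin 3 → ℝ) : ℝ := (Matrix.of ![a, b, c]).det

theorem stmt2 (d : ℕ) [NeZero d] (v n : Fin d → Fin 3 → ℝ) (α : Fin d → ℝ)
    (hn : ∀ m, n m = crossProduct (v m) (v (m + 1)))
    (hα : ∀ m, α m = det3 (v (m - 1)) (v m) (v (m + 1))) (i : Fin d) :
    det3 (n (i - 1)) (n i) (n (i + 1)) = α i * α (i + 1) := by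
  have h1 : i - 1 + 1 = i := sub_add_cancel i 1
  have h2 : i + 1 - 1 = i := add_sub_cancel_right i 1
  simp only [hn, hα, h1, h2, det3, crossProduct]
  simp [Matrix.det_fin_three, Fin.sum_univ_three]
  ring
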